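/- Let M be a weight sequence satisfying (M.2) and let ψ ∈ 𝒦^{(M)}(ℝ^d). Then for every h > 0 and every φ ∈ 𝒪^{M,h}_C(ℝ^d) there exists m ∈ ℕ such that sup_{(x,ξ)∈ℝ^{2d}} |V_ψ φ(x,ξ)| e^{−m|x| + ν_M(πhξ/√d)} < ∞. In other words, V_ψ maps 𝒪^{M,h}_C(ℝ^d) into C^∘_{exp;M,πh/√d}(ℝ^{2d}). -/

import Mathlib

open Filter MeasureTheory
open scoped BigOperators

set_option synthInstance.maxHeartbeats 1000000
set_option maxHeartbeats 1000000

noncomputable section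

abbrev Rd (d : ℕ) := EuclideanSpace ℝ (Fin d)

/-- Partial derivative in the `j`-th coordinate direction. -/
def dop {d : ℕ} {E : Type*} [NormedAddCommGroup E] [NormedSpace ℝ E]
    (j : Fin d) (f : Rd d → E) : Rd d → E :=
  fun x => fderiv ℝ f x (EuclideanSpace.single j (1:ℝ))

/-- Iterated partial derivative `∂^α` for a multi-index `α : Fin d → ℕ`. -/
def pD {d : ℕ} {E : Type*} [NormedAddCommGroup E] [NormedSpace ℝ E]
    (α : Fin d → ℕ) (f : Rd d → E) : Rd d → E :=
  (List.finRange d).foldr (fun j g => (dop j)^[α j] g) f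

/-- Length `|α|` of a multi-index. -/
def msize {d : ℕ} (α : Fin d → ℕ) : ℕ := ∑ j, α j

/-- `M` is a weight sequence: positive, normalized, `M_p^{1/p} → ∞`, log-convex. -/
def IsWeightSeq (M : ℕ → ℝ) : Prop :=
  (∀ p, 0 < M p) ∧ M 0 = 1 ∧ M 1 = 1 ∧
  Tendsto (fun p : ℕ => (M p) ^ ((p : ℝ)⁻¹)) atTop atTop ∧
  ∀ p : ℕ, 1 ≤ p → (M p)^2 ≤ M (p-1) * M (p+1)

/-- Condition (M.2) with explicit constants `C₀, H ≥ 1`. -/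
def HasM2 (M : ℕ → ℝ) (C₀ H : ℝ) : Prop :=
  1 ≤ C₀ ∧ 1 ≤ H ∧ ∀ p q : ℕ, M (p+q) ≤ C₀ * H^(p+q) * M p * M q

/-- Condition (M.2). -/
def M2 (M : ℕ → ℝ) : Prop := ∃ C₀ H, HasM2 M C₀ H

/-- Condition (M.2)*: `2 m_p ≤ m_{Np}` for `p ≥ p₀`. -/
def M2star (M : ℕ → ℝ) : Prop :=
  ∃ p₀ N : ℕ, 0 < p₀ ∧ 0 < N ∧
    ∀ p, p₀ ≤ p → 2 * (M p / M (p-1)) ≤ M (N*p) / M (N*p - 1)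

/-- Associated function `ν_M(t) = sup_p log(t^p / M_p)`. -/
def nuA (M : ℕ → ℝ) (t : ℝ) : ℝ := ⨆ p : ℕ, Real.log (t ^ p / M p)

/-- Short-time Fourier transform `V_ψ f(x,ξ) = ∫ f(t) conj(ψ(t-x)) e^{-2πi ξ·t} dt`. -/
def STFT {d : ℕ} (ψ f : Rd d → ℂ) (x ξ : Rd d) : ℂ :=
  ∫ t : Rd d, f t * (starRingEnd ℂ) (ψ (t - x)) *
    Complex.exp (-2 * Real.pi * Complex.I * ((inner ℝ ξ t : ℝ) : ℂ))

/-- `φ ∈ 𝒦^{(M)}(ℝ^d)` (Beurling type). -/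
def KBeu (d : ℕ) (M : ℕ → ℝ) (φ : Rd d → ℂ) : Prop :=
  ContDiff ℝ (⊤ : ℕ∞) φ ∧ ∀ k : ℝ, 0 < k → ∀ n : ℕ, ∃ C : ℝ,
    ∀ (α : Fin d → ℕ) (x : Rd d),
      k ^ msize α * ‖pD α φ x‖ * Real.exp ((n : ℝ) * ‖x‖) ≤ C * M (msize α)

/-- `φ ∈ 𝒦^{{M}}(ℝ^d)` (Roumieu type). -/
def KRou (d : ℕ) (M : ℕ → ℝ) (φ : Rd d → ℂ) : Prop :=
  ContDiff ℝ (⊤ : ℕ∞) φ ∧ ∃ k : ℝ, 0 < k ∧ ∀ n : ℕ, ∃ C : ℝ,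
    ∀ (α : Fin d → ℕ) (x : Rd d),
      k ^ msize α * ‖pD α φ x‖ * Real.exp ((n : ℝ) * ‖x‖) ≤ C * M (msize α)

/-- `φ ∈ 𝒪^{M,h}_C(ℝ^d)`: smooth with, for some `n`,
`sup_α sup_x h^{|α|}|∂^α φ(x)| e^{-n|x|}/M_α < ∞`. -/
def OC (d : ℕ) (M : ℕ → ℝ) (h : ℝ) (φ : Rd d → ℂ) : Prop :=
  ContDiff ℝ (⊤ : ℕ∞) φ ∧ ∃ n : ℕ, ∃ C : ℝ, ∀ (α : Fin d → ℕ) (x : Rd d),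
    h ^ msize α * ‖pD α φ x‖ ≤ C * M (msize α) * Real.exp ((n : ℝ) * ‖x‖)

namespace Stmt8Aux

variable {d : ℕ}

/-- basis vector -/
noncomputable def eb (j : Fin d) : Rd d := EuclideanSpace.single j (1:ℝ)

def dops (L : List (Fin d)) (f : Rd d → ℂ) : Rd d → ℂ := L.foldr dop f

@[simp] lemma dops_nil (f : Rd d → ℂ) : dops [] f = f := rfl

@[simp] lemma dops_cons (j : Fin d) (L : List (Fin d)) (f : Rd d → ℂ) :
    dops (j :: L) f = dop j (dops L f) := rfl

lemma dops_append (L₁ L₂ : List (Fin d)) (f : Rd d → ℂ) :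
    dops (L₁ ++ L₂) f = dops L₁ (dops L₂ f) := by
  simp [dops, List.foldr_append]

lemma contDiff_dop {f : Rd d → ℂ} (hf : ContDiff ℝ (⊤:ℕ∞) f) (j : Fin d) :
    ContDiff ℝ (⊤:ℕ∞) (dop j f) := by
  have h1 : ContDiff ℝ (⊤:ℕ∞) (fderiv ℝ f) :=
    hf.fderiv_right (by exact_mod_cast le_refl _)
  exact h1.clm_apply contDiff_const

lemma contDiff_dops {f : Rd d → ℂ} (hf : ContDiff ℝ (⊤:ℕ∞) f) (L : List (Fin d)) :
    ContDiff ℝ (⊤:ℕ∞) (dops L f) := by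
  induction L with
  | nil => exact hf
  | cons j L ih => exact contDiff_dop ih j

lemma dop_comm {f : Rd d → ℂ} (hf : ContDiff ℝ (⊤:ℕ∞) f) (i j : Fin d) :
    dop i (dop j f) = dop j (dop i f) := by
  funext x
  have hdiff : Differentiable ℝ f := hf.differentiable (by simp)
  have h1 : ContDiff ℝ (⊤:ℕ∞) (fderiv ℝ f) :=
    hf.fderiv_right (by exact_mod_cast le_refl _)
  have hd1 : Differentiable ℝ (fderiv ℝ f) := h1.differentiable (by simp)
  have E1 : ∀ (v w : Rd d), fderiv ℝ (fun y => fderiv ℝ f y v) x w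
      = fderiv ℝ (fderiv ℝ f) x w v := by
    intro v w
    rw [fderiv_clm_apply (hd1 x) (differentiableAt_const v)]
    simp
  have hsym := second_derivative_symmetric (f := f) (f' := fderiv ℝ f)
    (f'' := fderiv ℝ (fderiv ℝ f) x) (fun y => (hdiff y).hasFDerivAt)
    (hd1 x).hasFDerivAt (eb i) (eb j)
  show fderiv ℝ (dop j f) x (eb i) = fderiv ℝ (dop i f) x (eb j)
  calc fderiv ℝ (dop j f) x (eb i) = fderiv ℝ (fderiv ℝ f) x (eb i) (eb j) := E1 (eb j) (eb i)
    _ = fderiv ℝ (fderiv ℝ f) x (eb j) (eb i) := hsym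
    _ = fderiv ℝ (dop i f) x (eb j) := (E1 (eb i) (eb j)).symm

lemma dops_perm {f : Rd d → ℂ} (hf : ContDiff ℝ (⊤:ℕ∞) f) {L₁ L₂ : List (Fin d)}
    (hP : L₁.Perm L₂) : dops L₁ f = dops L₂ f := by
  induction hP with
  | nil => rfl
  | cons j hP ih => simp only [dops_cons, ih]
  | swap i j L => simp only [dops_cons]; rw [dop_comm (contDiff_dops hf L)]
  | trans h₁ h₂ ih₁ ih₂ => rw [ih₁, ih₂]

lemma iteratedFDeriv_basis_eq_dops' :
    ∀ (n : ℕ) (f : Rd d → ℂ), ContDiff ℝ (⊤:ℕ∞) f → ∀ (m : Fin n → Fin d) (x : Rd d),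
      iteratedFDeriv ℝ n f x (fun i => eb (m i)) = dops (List.ofFn m) f x := by
  intro n
  induction n with
  | zero => intro f hf m x; simp [dops, List.ofFn_zero, iteratedFDeriv_zero_apply]
  | succ n ih =>
    intro f hf m x
    have h1 : ContDiff ℝ (⊤:ℕ∞) (fderiv ℝ f) :=
      hf.fderiv_right (by exact_mod_cast le_refl _)
    have hcomp := ContinuousLinearMap.iteratedFDeriv_comp_left
      (f := fderiv ℝ f) (i := n) (ContinuousLinearMap.apply ℝ ℂ (eb (m (Fin.last n)))) (h1.contDiffAt (x := x))
      (by exact_mod_cast le_top)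
    have hstep : iteratedFDeriv ℝ (n+1) f x (fun i => eb (m i)) =
        iteratedFDeriv ℝ n (dop (m (Fin.last n)) f) x (fun i => eb (m (Fin.castSucc i))) := by
      rw [iteratedFDeriv_succ_apply_right]
      have : dop (m (Fin.last n)) f =
          (ContinuousLinearMap.apply ℝ ℂ (eb (m (Fin.last n)))) ∘ (fderiv ℝ f) := rfl
      rw [this, hcomp]
      rfl
    rw [hstep, ih (dop (m (Fin.last n)) f) (contDiff_dop hf _) (fun i => m (Fin.castSucc i)) x]
    have : List.ofFn m = (List.ofFn fun i => m (Fin.castSucc i)) ++ [m (Fin.last n)] := by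
      rw [List.ofFn_succ', List.concat_eq_append]
    rw [this, dops_append]
    rfl

lemma iteratedFDeriv_basis_eq_dops {f : Rd d → ℂ} (hf : ContDiff ℝ (⊤:ℕ∞) f)
    (n : ℕ) (m : Fin n → Fin d) (x : Rd d) :
    iteratedFDeriv ℝ n f x (fun i => eb (m i)) = dops (List.ofFn m) f x :=
  iteratedFDeriv_basis_eq_dops' n f hf m x

def alphaOf {n : ℕ} (m : Fin n → Fin d) : Fin d → ℕ := fun j => (List.ofFn m).count j

lemma sum_count (L : List (Fin d)) : ∑ j, L.count j = L.length := by
  induction L with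
  | nil => simp
  | cons a L ih =>
    simp only [List.count_cons, List.length_cons]
    rw [Finset.sum_add_distrib, ih]
    congr 1
    rw [Finset.sum_eq_single a]
    · simp
    · intro b _ hb
      simp [(by simpa [eq_comm] using hb : ¬ (a = b))]
    · simp

def canon (α : Fin d → ℕ) : List (Fin d) :=
  (List.finRange d).flatMap (fun j => List.replicate (α j) j)

lemma dops_replicate (k : ℕ) (j : Fin d) (L : List (Fin d)) (f : Rd d → ℂ) :
    dops (List.replicate k j ++ L) f = (dop j)^[k] (dops L f) := by
  induction k with
  | zero => rfl
  | succ k ih =>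
    rw [List.replicate_succ, List.cons_append, dops_cons, ih]
    exact (Function.iterate_succ_apply' (dop j) k (dops L f)).symm

lemma pD_eq_dops (α : Fin d → ℕ) (f : Rd d → ℂ) : pD α f = dops (canon α) f := by
  unfold pD canon
  induction List.finRange d with
  | nil => rfl
  | cons j js ih =>
    simp only [List.foldr_cons, List.flatMap_cons, ih, dops_replicate]

lemma count_canon (α : Fin d → ℕ) (l : Fin d) : (canon α).count l = α l := by
  unfold canon
  have key : ∀ js : List (Fin d), js.Nodup →
      ((js.flatMap fun j => List.replicate (α j) j).count l) = if l ∈ js then α l else 0 := by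
    intro js
    induction js with
    | nil => simp
    | cons j js ih =>
      intro hnd
      rw [List.flatMap_cons, List.count_append, List.count_replicate, ih (List.Nodup.of_cons hnd)]
      rcases eq_or_ne l j with rfl | hne
      · have : l ∉ js := (List.nodup_cons.1 hnd).1
        simp [this]
      · simp [hne, Ne.symm hne, List.mem_cons]
  rw [key _ (List.nodup_finRange d), if_pos (List.mem_finRange l)]

lemma msize_alphaOf {n : ℕ} (m : Fin n → Fin d) : msize (alphaOf m) = n := by
  unfold msize alphaOf
  rw [sum_count, List.length_ofFn]

lemma iteratedFDeriv_basis_eq_pD {f : Rd d → ℂ} (hf : ContDiff ℝ (⊤:ℕ∞) f)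
    (n : ℕ) (m : Fin n → Fin d) (x : Rd d) :
    iteratedFDeriv ℝ n f x (fun i => eb (m i)) = pD (alphaOf m) f x := by
  rw [iteratedFDeriv_basis_eq_dops hf n m x, pD_eq_dops]
  have hperm : (canon (alphaOf m)).Perm (List.ofFn m) :=
    List.perm_iff_count.2 (fun a => by rw [count_canon]; rfl)
  exact (congrFun (dops_perm hf hperm) x).symm

lemma l1_le_sqrt_mul_norm (u : Rd d) : ∑ j, ‖u j‖ ≤ Real.sqrt d * ‖u‖ := by
  have h1 : (∑ j, ‖u j‖)^2 ≤ (d : ℝ) * ∑ j, ‖u j‖^2 := by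
    simpa using sq_sum_le_card_mul_sum_sq (s := (Finset.univ : Finset (Fin d)))
      (f := fun j => ‖u j‖)
  have h2 : ∑ j, ‖u j‖^2 = ‖u‖^2 := by
    rw [EuclideanSpace.norm_eq, Real.sq_sqrt (by positivity)]
  calc ∑ j, ‖u j‖ = Real.sqrt ((∑ j, ‖u j‖)^2) := (Real.sqrt_sq (by positivity)).symm
    _ ≤ Real.sqrt ((d:ℝ) * ‖u‖^2) := Real.sqrt_le_sqrt (by rw [← h2]; exact h1)
    _ = Real.sqrt d * ‖u‖ := by
        rw [Real.sqrt_mul (by positivity), Real.sqrt_sq (norm_nonneg u)]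

lemma cml_norm_le {n : ℕ} (A : ContinuousMultilinearMap ℝ (fun _ : Fin n => Rd d) ℂ)
    {S : ℝ} (hS : 0 ≤ S) (h : ∀ m : Fin n → Fin d, ‖A (fun i => eb (m i))‖ ≤ S) :
    ‖A‖ ≤ Real.sqrt d ^ n * S := by
  refine A.opNorm_le_bound (by positivity) (fun v => ?_)
  have hv : ∀ i : Fin n, v i = ∑ j, (v i j) • eb j := by
    intro i
    have := (EuclideanSpace.basisFun (Fin d) ℝ).sum_repr (v i)
    simp only [EuclideanSpace.basisFun_repr, EuclideanSpace.basisFun_apply] at this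
    exact this.symm
  have expand : A v = ∑ r ∈ Fintype.piFinset (fun _ : Fin n => (Finset.univ : Finset (Fin d))),
      (∏ i, v i (r i)) • A (fun i => eb (r i)) := by
    calc A v = A (fun i => ∑ j, (v i j) • eb j) := by
          congr 1; funext i; exact hv i
      _ = ∑ r ∈ Fintype.piFinset (fun _ : Fin n => (Finset.univ : Finset (Fin d))),
            A (fun i => (v i (r i)) • eb (r i)) :=
          MultilinearMap.map_sum_finset (f := A.toMultilinearMap) (α := fun _ : Fin n => Fin d)
            (fun i j => (v i j) • eb j) (fun _ => (Finset.univ : Finset (Fin d)))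
      _ = _ := by
          refine Finset.sum_congr rfl (fun r _ => ?_)
          exact A.toMultilinearMap.map_smul_univ (fun i => v i (r i)) (fun i => eb (r i))
  calc ‖A v‖ ≤ ∑ r ∈ Fintype.piFinset (fun _ : Fin n => (Finset.univ : Finset (Fin d))),
        ‖(∏ i, v i (r i)) • A (fun i => eb (r i))‖ := by rw [expand]; exact norm_sum_le _ _
    _ ≤ ∑ r ∈ Fintype.piFinset (fun _ : Fin n => (Finset.univ : Finset (Fin d))),
        (∏ i, ‖v i (r i)‖) * S := by
        refine Finset.sum_le_sum (fun r _ => ?_)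
        rw [norm_smul]
        have : ‖∏ i, v i (r i)‖ = ∏ i, ‖v i (r i)‖ := by
          simp [Real.norm_eq_abs, Finset.abs_prod]
        rw [this]
        exact mul_le_mul_of_nonneg_left (h r) (by positivity)
    _ = (∏ i, ∑ j, ‖v i j‖) * S := by
        rw [← Finset.sum_mul]
        congr 1
        exact (Finset.prod_univ_sum (κ := fun _ : Fin n => Fin d) (fun _ => Finset.univ) (fun i j => ‖v i j‖)).symm
    _ ≤ (∏ i : Fin n, Real.sqrt d * ‖v i‖) * S := by
        refine mul_le_mul_of_nonneg_right (Finset.prod_le_prod (fun i _ => ?_) (fun i _ => ?_)) hS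
        · exact Finset.sum_nonneg (fun j _ => norm_nonneg _)
        · exact l1_le_sqrt_mul_norm (v i)
    _ = Real.sqrt d ^ n * S * ∏ i, ‖v i‖ := by
        rw [Finset.prod_mul_distrib, Finset.prod_const]
        simp [Finset.card_univ]
        ring

lemma iterated_bound {M : ℕ → ℝ} {f : Rd d → ℂ} (hf : ContDiff ℝ (⊤:ℕ∞) f)
    {A c : ℝ} {w : Rd d → ℝ} (hA : 0 ≤ A) (hc : 0 ≤ c) (hM : ∀ p, 0 ≤ M p)
    (hw : ∀ t, 0 ≤ w t)
    (hb : ∀ (α : Fin d → ℕ) (t : Rd d), ‖pD α f t‖ ≤ A * c ^ msize α * M (msize α) * w t)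
    (n : ℕ) (t : Rd d) :
    ‖iteratedFDeriv ℝ n f t‖ ≤ A * (Real.sqrt d * c) ^ n * M n * w t := by
  have key := cml_norm_le (iteratedFDeriv ℝ n f t) (S := A * c^n * M n * w t)
    (mul_nonneg (mul_nonneg (mul_nonneg hA (pow_nonneg hc n)) (hM n)) (hw t))
    (fun m => by
      rw [iteratedFDeriv_basis_eq_pD hf n m t]
      have hbb := hb (alphaOf m) t
      rwa [msize_alphaOf] at hbb)
  calc ‖iteratedFDeriv ℝ n f t‖ ≤ Real.sqrt d ^ n * (A * c^n * M n * w t) := key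
    _ = A * (Real.sqrt d * c)^n * M n * w t := by rw [mul_pow]; ring

lemma dop_shift {u : Rd d → ℂ} (hu : Differentiable ℝ u) (x : Rd d) (j : Fin d) (t : Rd d) :
    dop j (fun s => u (s - x)) t = dop j u (t - x) := by
  have h : HasFDerivAt (fun s : Rd d => u (s - x)) (fderiv ℝ u (t - x)) t := by
    have h1 : HasFDerivAt (fun s : Rd d => s - x) (ContinuousLinearMap.id ℝ (Rd d)) t :=
      (hasFDerivAt_id t).sub_const x
    have := (hu (t - x)).hasFDerivAt.comp t h1
    exact this
  show fderiv ℝ (fun s => u (s - x)) t (EuclideanSpace.single j 1) = _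
  rw [h.fderiv]
  rfl

lemma dop_conj {u : Rd d → ℂ} (hu : Differentiable ℝ u) (j : Fin d) (t : Rd d) :
    dop j (fun s => (starRingEnd ℂ) (u s)) t = (starRingEnd ℂ) (dop j u t) := by
  have h : HasFDerivAt (fun s => (starRingEnd ℂ) (u s))
      ((Complex.conjCLE.toContinuousLinearMap).comp (fderiv ℝ u t)) t := by
    have := (Complex.conjCLE.toContinuousLinearMap.hasFDerivAt
      (x := u t)).comp t (hu t).hasFDerivAt
    exact this
  show fderiv ℝ (fun s => (starRingEnd ℂ) (u s)) t (EuclideanSpace.single j 1) = _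
  rw [h.fderiv]
  rfl

lemma contDiff_conj_shift {u : Rd d → ℂ} (hu : ContDiff ℝ (⊤:ℕ∞) u) (x : Rd d) :
    ContDiff ℝ (⊤:ℕ∞) (fun s => (starRingEnd ℂ) (u (s - x))) := by
  have h1 : ContDiff ℝ (⊤:ℕ∞) (fun s : Rd d => u (s - x)) :=
    hu.comp (contDiff_id.sub contDiff_const)
  exact Complex.conjCLE.toContinuousLinearMap.contDiff.comp h1

lemma contDiff_shift {u : Rd d → ℂ} (hu : ContDiff ℝ (⊤:ℕ∞) u) (x : Rd d) :
    ContDiff ℝ (⊤:ℕ∞) (fun s : Rd d => u (s - x)) :=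
  hu.comp (contDiff_id.sub contDiff_const)

lemma dops_conj_shift {u : Rd d → ℂ} (hu : ContDiff ℝ (⊤:ℕ∞) u) (x : Rd d)
    (L : List (Fin d)) :
    ∀ t, dops L (fun s => (starRingEnd ℂ) (u (s - x))) t
      = (starRingEnd ℂ) (dops L u (t - x)) := by
  induction L with
  | nil => intro t; rfl
  | cons j L ih =>
    intro t
    have hrw : dops L (fun s => (starRingEnd ℂ) (u (s - x)))
        = fun s => (starRingEnd ℂ) (dops L u (s - x)) := funext ih
    have hd : Differentiable ℝ (dops L u) :=
      (contDiff_dops hu L).differentiable (by simp)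
    have hd2 : Differentiable ℝ (fun s : Rd d => dops L u (s - x)) :=
      (contDiff_shift (contDiff_dops hu L) x).differentiable (by simp)
    rw [dops_cons, hrw, dop_conj hd2 j t, dop_shift hd x j t]
    rfl

lemma norm_pD_conj_shift {u : Rd d → ℂ} (hu : ContDiff ℝ (⊤:ℕ∞) u) (x : Rd d)
    (α : Fin d → ℕ) (t : Rd d) :
    ‖pD α (fun s => (starRingEnd ℂ) (u (s - x))) t‖ = ‖pD α u (t - x)‖ := by
  rw [pD_eq_dops, pD_eq_dops, dops_conj_shift hu x (canon α) t]
  exact RCLike.norm_conj _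

section WeightSeq

variable {M : ℕ → ℝ}

lemma ratio_step (hpos : ∀ p, 0 < M p)
    (hconv : ∀ p : ℕ, 1 ≤ p → (M p)^2 ≤ M (p-1) * M (p+1)) (k : ℕ) :
    M (k+1) / M k ≤ M (k+2) / M (k+1) := by
  have h := hconv (k+1) (by omega)
  simp only [Nat.add_sub_cancel] at h
  rw [div_le_div_iff₀ (hpos k) (hpos (k+1))]
  nlinarith [hpos k, hpos (k+1), hpos (k+2)]

lemma ratio_mono (hpos : ∀ p, 0 < M p)
    (hconv : ∀ p : ℕ, 1 ≤ p → (M p)^2 ≤ M (p-1) * M (p+1)) :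
    Monotone (fun k => M (k+1) / M k) :=
  monotone_nat_of_le_succ (fun k => ratio_step hpos hconv k)

lemma M_mul_le (hpos : ∀ p, 0 < M p) (h0 : M 0 = 1) (h1 : M 1 = 1)
    (hconv : ∀ p : ℕ, 1 ≤ p → (M p)^2 ≤ M (p-1) * M (p+1)) (a b : ℕ) :
    M a * M b ≤ M (a + b) := by
  induction b with
  | zero => simp [h0]
  | succ b ih =>
    have hr : M (b+1) / M b ≤ M (a+b+1) / M (a+b) :=
      ratio_mono hpos hconv (by omega : b ≤ a + b)
    have h2 : M (b+1) * M (a+b) ≤ M (a+b+1) * M b := by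
      rw [div_le_div_iff₀ (hpos b) (hpos (a+b))] at hr
      linarith
    have step1 : M (b+1) * (M a * M b) ≤ M (b+1) * M (a+b) :=
      mul_le_mul_of_nonneg_left ih (le_of_lt (hpos (b+1)))
    have key : M a * M (b+1) * M b ≤ M (a+b+1) * M b := by nlinarith [step1, h2]
    have : a + (b+1) = (a+b)+1 := by omega
    rw [this]
    exact le_of_mul_le_mul_right key (hpos b)

lemma M_one_le (hpos : ∀ p, 0 < M p) (h0 : M 0 = 1) (h1 : M 1 = 1)
    (hconv : ∀ p : ℕ, 1 ≤ p → (M p)^2 ≤ M (p-1) * M (p+1)) (p : ℕ) :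
    1 ≤ M p := by
  induction p with
  | zero => simp [h0]
  | succ p ih =>
    have hr : (1:ℝ) ≤ M (p+1) / M p := by
      have h10 : M 1 / M 0 = 1 := by simp [h0, h1]
      rcases Nat.eq_zero_or_pos p with rfl | hp
      · simp [h0, h1]
      · have := ratio_mono hpos hconv (by omega : 0 ≤ p)
        simp only [zero_add, h10] at this
        exact this
    have := mul_le_mul ih hr zero_le_one (le_of_lt (hpos _))
    rw [one_mul, mul_div_cancel₀ _ (ne_of_gt (hpos p))] at this
    linarith

end WeightSeq

lemma integrable_exp_decay (x : Rd d) :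
    Integrable (fun t : Rd d => Real.exp (-((d:ℝ)+1) * ‖t - x‖)) := by
  have base : Integrable (fun t : Rd d => Real.exp (-((d:ℝ)+1) * ‖t‖)) := by
    have hnr : ((Module.finrank ℝ (Rd d) : ℝ)) < (d:ℝ)+1 := by
      rw [finrank_euclideanSpace_fin]; linarith
    refine ((integrable_one_add_norm hnr).mono' ?_ ?_)
    · exact (Real.continuous_exp.comp
        ((continuous_const.mul continuous_norm))).aestronglyMeasurable
    · filter_upwards with t
      rw [Real.norm_eq_abs, abs_of_pos (Real.exp_pos _)]
      rw [Real.rpow_neg (by positivity), ← Real.exp_log (show (0:ℝ) < (1+‖t‖)^((d:ℝ)+1) by positivity),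
        ← Real.exp_neg]
      apply Real.exp_le_exp.2
      rw [Real.log_rpow (by positivity)]
      have hlog : Real.log (1 + ‖t‖) ≤ ‖t‖ := by
        have := Real.log_le_sub_one_of_pos (show (0:ℝ) < 1 + ‖t‖ by positivity)
        linarith
      nlinarith [norm_nonneg t, hlog]
  exact base.comp_sub_right x

open scoped FourierTransform RealInnerProductSpace in
lemma pow_norm_fourier_le {F : Rd d → ℂ} (hF : ContDiff ℝ (⊤:ℕ∞) F)
    (hint : ∀ n : ℕ, Integrable (iteratedFDeriv ℝ n F)) (p : ℕ) (ξ : Rd d) :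
    (2 * Real.pi * ‖ξ‖)^p * ‖𝓕 F ξ‖
      ≤ ∫ t, ‖iteratedFDeriv ℝ p F t‖ := by
  rcases Nat.eq_zero_or_pos p with rfl | hp
  · simp only [pow_zero, one_mul]
    refine (VectorFourier.norm_fourierIntegral_le_integral_norm _ _ _ _ _).trans (le_of_eq ?_)
    refine integral_congr_ae (Filter.Eventually.of_forall (fun t => ?_))
    simp
  rcases eq_or_ne ξ 0 with rfl | hξ
  · have hz : (2 * Real.pi * ‖(0 : Rd d)‖) ^ p = 0 := by
      simp [hp.ne']
    rw [hz, zero_mul]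
    exact integral_nonneg (fun t => norm_nonneg _)
  have hiter := Real.fourier_iteratedFDeriv (N := (⊤:ℕ∞)) hF
      (fun n _ => hint n) (le_top : (p : ℕ∞) ≤ ⊤)
  have heval := congrFun hiter ξ
  have h2 : (𝓕 (iteratedFDeriv ℝ p F) ξ) (fun _ : Fin p => ξ)
      = (-(2 * (Real.pi:ℂ) * Complex.I))^p • (((-‖ξ‖^2 : ℝ))^p • 𝓕 F ξ) := by
    rw [heval, VectorFourier.fourierPowSMulRight_apply]
    congr 2
    rw [Finset.prod_const, Finset.card_univ, Fintype.card_fin]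
    congr 1
    have : ((-innerSL ℝ) ξ) ξ = -(innerSL ℝ ξ ξ) := rfl
    rw [this, innerSL_apply_apply, real_inner_self_eq_norm_sq]
  have h3 : ‖(𝓕 (iteratedFDeriv ℝ p F) ξ) (fun _ : Fin p => ξ)‖
      = (2*Real.pi)^p * ((‖ξ‖^2)^p * ‖𝓕 F ξ‖) := by
    rw [h2, norm_smul, norm_smul]
    have e1 : ‖(-(2 * (Real.pi:ℂ) * Complex.I))^p‖ = (2*Real.pi)^p := by
      rw [norm_pow, norm_neg]
      congr 1
      rw [norm_mul, Complex.norm_I, mul_one, norm_mul]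
      simp [Real.pi_pos.le, abs_of_nonneg]
    have e2 : ‖((-‖ξ‖^2 : ℝ))^p‖ = (‖ξ‖^2)^p := by
      rw [Real.norm_eq_abs, abs_pow, abs_neg, abs_of_nonneg (sq_nonneg _)]
    rw [e1, e2]
  have h1 : ‖(𝓕 (iteratedFDeriv ℝ p F) ξ) (fun _ : Fin p => ξ)‖
      ≤ (∫ t, ‖iteratedFDeriv ℝ p F t‖) * ‖ξ‖^p := by
    calc ‖(𝓕 (iteratedFDeriv ℝ p F) ξ) (fun _ : Fin p => ξ)‖
        ≤ ‖𝓕 (iteratedFDeriv ℝ p F) ξ‖ * ∏ _i : Fin p, ‖ξ‖ :=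
          ContinuousMultilinearMap.le_opNorm _ _
      _ ≤ (∫ t, ‖iteratedFDeriv ℝ p F t‖) * ‖ξ‖^p := by
          rw [Finset.prod_const, Finset.card_univ, Fintype.card_fin]
          exact mul_le_mul_of_nonneg_right
            (VectorFourier.norm_fourierIntegral_le_integral_norm _ _ _ _ _) (by positivity)
  rw [h3] at h1
  have hξp : 0 < ‖ξ‖^p := pow_pos (norm_pos_iff.2 hξ) p
  refine le_of_mul_le_mul_right ?_ hξp
  calc (2 * Real.pi * ‖ξ‖)^p * ‖𝓕 F ξ‖ * ‖ξ‖^p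
      = (2*Real.pi)^p * ((‖ξ‖^2)^p * ‖𝓕 F ξ‖) := by
        rw [mul_pow, mul_pow, ← pow_mul]
        ring_nf
      _ ≤ (∫ t, ‖iteratedFDeriv ℝ p F t‖) * ‖ξ‖^p := h1


open scoped FourierTransform RealInnerProductSpace in
lemma stft_eq (psi phi : Rd d → ℂ) (x ξ : Rd d) :
    STFT psi phi x ξ
      = 𝓕 (fun t => phi t * (starRingEnd ℂ) (psi (t - x))) ξ := by
  rw [Real.fourier_eq']
  unfold STFT
  refine integral_congr_ae (Filter.Eventually.of_forall (fun t => ?_))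
  have hexp : Complex.exp (-2 * (Real.pi:ℂ) * Complex.I * ((inner ℝ ξ t : ℝ) : ℂ))
      = Complex.exp (((-2 * Real.pi * (inner ℝ t ξ : ℝ) : ℝ) : ℂ) * Complex.I) := by
    congr 1
    push_cast
    rw [real_inner_comm]
    ring
  simp only [smul_eq_mul]
  rw [hexp]
  ring

end Stmt8Aux

/-- Mapping property of the STFT on the convolutor space `𝒪^{M,h}_C` (Lemma 5.4(ii)):
`V_ψ : 𝒪^{M,h}_C(ℝ^d) → C^∘_{exp;M,πh/√d}(ℝ^{2d})`. -/
theorem stmt8 (d : ℕ) (M : ℕ → ℝ) (hM : IsWeightSeq M) (hM2 : M2 M)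
    (ψ : Rd d → ℂ) (hψ : KBeu d M ψ)
    (h : ℝ) (hh : 0 < h) (φ : Rd d → ℂ) (hφ : OC d M h φ) :
    ∃ m : ℕ, ∃ C : ℝ, ∀ x ξ : Rd d,
      ‖STFT ψ φ x ξ‖ ≤
        C * Real.exp ((m : ℝ) * ‖x‖ - nuA M (Real.pi * h * ‖ξ‖ / Real.sqrt d)) := by
  classical
  obtain ⟨Mpos, M0, M1, _Mtend, Mconv⟩ := hM
  obtain ⟨hφs, n₀, Cφ, hφb⟩ := hφ
  obtain ⟨hψs, hψball⟩ := hψ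
  obtain ⟨Cψ, hψb⟩ := hψball h hh (n₀ + d + 1)
  set qR : ℝ := ((n₀ + d + 1 : ℕ) : ℝ) with hqRdef
  have hqR : qR = (n₀:ℝ) + d + 1 := by rw [hqRdef]; push_cast; ring
  have hMnn : ∀ p, 0 ≤ M p := fun p => (Mpos p).le
  -- nonnegativity of the constants
  have hCφ : 0 ≤ Cφ := by
    have h00 := hφb (fun _ => 0) 0
    simp only [msize, Finset.sum_const_zero, pow_zero, one_mul, norm_zero, mul_zero,
      Real.exp_zero, mul_one, M0] at h00
    exact le_trans (norm_nonneg _) h00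
  have hCψ : 0 ≤ Cψ := by
    have h00 := hψb (fun _ => 0) 0
    simp only [msize, Finset.sum_const_zero, pow_zero, one_mul, norm_zero, mul_zero,
      Real.exp_zero, mul_one, M0] at h00
    exact le_trans (norm_nonneg _) h00
  -- pD-type bounds
  have hbφ : ∀ (α : Fin d → ℕ) (t : Rd d),
      ‖pD α φ t‖ ≤ Cφ * (h⁻¹) ^ msize α * M (msize α) * Real.exp ((n₀:ℝ) * ‖t‖) := by
    intro α t
    have hb := hφb α t
    have hhk : (0:ℝ) < h ^ msize α := pow_pos hh _
    calc ‖pD α φ t‖ = (h ^ msize α)⁻¹ * (h ^ msize α * ‖pD α φ t‖) := by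
          field_simp
      _ ≤ (h ^ msize α)⁻¹ * (Cφ * M (msize α) * Real.exp ((n₀:ℝ) * ‖t‖)) :=
          mul_le_mul_of_nonneg_left hb (by positivity)
      _ = Cφ * (h⁻¹) ^ msize α * M (msize α) * Real.exp ((n₀:ℝ) * ‖t‖) := by
          rw [inv_pow]; ring
  have hbψ : ∀ (α : Fin d → ℕ) (y : Rd d),
      ‖pD α ψ y‖ ≤ Cψ * (h⁻¹) ^ msize α * M (msize α) * Real.exp (-qR * ‖y‖) := by
    intro α y
    have hb := hψb α y
    have hpos : (0:ℝ) < h ^ msize α * Real.exp (qR * ‖y‖) := by positivity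
    have key : ‖pD α ψ y‖ * (h ^ msize α * Real.exp (qR * ‖y‖)) ≤ Cψ * M (msize α) := by
      calc ‖pD α ψ y‖ * (h ^ msize α * Real.exp (qR * ‖y‖))
          = h ^ msize α * ‖pD α ψ y‖ * Real.exp (qR * ‖y‖) := by ring
        _ ≤ Cψ * M (msize α) := hb
    have hle := (le_div_iff₀ hpos).2 key
    calc ‖pD α ψ y‖ ≤ Cψ * M (msize α) / (h ^ msize α * Real.exp (qR * ‖y‖)) := hle
      _ = Cψ * (h⁻¹) ^ msize α * M (msize α) * Real.exp (-qR * ‖y‖) := by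
          rw [neg_mul, Real.exp_neg, div_eq_mul_inv, mul_inv, inv_pow]; ring
  refine ⟨n₀, Cφ * Cψ * (∫ t : Rd d, Real.exp (-((d:ℝ)+1) * ‖t‖)), fun x ξ => ?_⟩
  set Cint : ℝ := ∫ t : Rd d, Real.exp (-((d:ℝ)+1) * ‖t‖) with hCintdef
  have hCint : 0 ≤ Cint := integral_nonneg (fun t => (Real.exp_pos _).le)
  set C : ℝ := Cφ * Cψ * Cint with hCdef
  have hC : 0 ≤ C := by positivity
  set T : ℝ := Real.pi * h * ‖ξ‖ / Real.sqrt d with hTdef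
  have hTnn : 0 ≤ T := by
    rw [hTdef]
    exact div_nonneg (by positivity) (Real.sqrt_nonneg _)
  set g : Rd d → ℂ := fun s => (starRingEnd ℂ) (ψ (s - x)) with hgdef
  have hg : ContDiff ℝ (⊤:ℕ∞) g := Stmt8Aux.contDiff_conj_shift hψs x
  set F : Rd d → ℂ := fun t => φ t * g t with hFdef
  have hF : ContDiff ℝ (⊤:ℕ∞) F := hφs.mul hg
  -- derivative bounds
  have hDφ : ∀ (k : ℕ) (t : Rd d), ‖iteratedFDeriv ℝ k φ t‖
      ≤ Cφ * (Real.sqrt d * h⁻¹) ^ k * M k * Real.exp ((n₀:ℝ) * ‖t‖) :=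
    Stmt8Aux.iterated_bound hφs hCφ (inv_nonneg.2 hh.le) hMnn
      (fun t => (Real.exp_pos _).le) hbφ
  have hbg : ∀ (α : Fin d → ℕ) (t : Rd d),
      ‖pD α g t‖ ≤ Cψ * (h⁻¹) ^ msize α * M (msize α) * Real.exp (-qR * ‖t - x‖) := by
    intro α t
    rw [hgdef, Stmt8Aux.norm_pD_conj_shift hψs x α t]
    exact hbψ α (t - x)
  have hDg : ∀ (k : ℕ) (t : Rd d), ‖iteratedFDeriv ℝ k g t‖
      ≤ Cψ * (Real.sqrt d * h⁻¹) ^ k * M k * Real.exp (-qR * ‖t - x‖) :=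
    Stmt8Aux.iterated_bound hg hCψ (inv_nonneg.2 hh.le) hMnn
      (fun t => (Real.exp_pos _).le) hbg
  -- Leibniz bound
  have hBF : ∀ (j : ℕ) (t : Rd d), ‖iteratedFDeriv ℝ j F t‖
      ≤ (Cφ * Cψ * Real.exp ((n₀:ℝ) * ‖x‖)) * (2 * Real.sqrt d * h⁻¹) ^ j * M j
        * Real.exp (-((d:ℝ)+1) * ‖t - x‖) := by
    intro j t
    have lb := norm_iteratedFDeriv_mul_le (𝕜 := ℝ) hφs hg t (n := j)
      (by exact_mod_cast le_top)
    have hexps : Real.exp ((n₀:ℝ) * ‖t‖) * Real.exp (-qR * ‖t - x‖)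
        ≤ Real.exp ((n₀:ℝ) * ‖x‖) * Real.exp (-((d:ℝ)+1) * ‖t - x‖) := by
      rw [← Real.exp_add, ← Real.exp_add]
      apply Real.exp_le_exp.2
      have htri : ‖t‖ - ‖x‖ ≤ ‖t - x‖ := norm_sub_norm_le t x
      have hn0 : (0:ℝ) ≤ (n₀:ℝ) := Nat.cast_nonneg _
      rw [hqR]
      nlinarith [mul_le_mul_of_nonneg_left htri hn0]
    have hterm : ∀ i ∈ Finset.range (j+1),
        (j.choose i : ℝ) * ‖iteratedFDeriv ℝ i φ t‖ * ‖iteratedFDeriv ℝ (j-i) g t‖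
        ≤ (j.choose i : ℝ) * ((Cφ * Cψ * Real.exp ((n₀:ℝ) * ‖x‖))
            * (Real.sqrt d * h⁻¹) ^ j * M j * Real.exp (-((d:ℝ)+1) * ‖t - x‖)) := by
      intro i hi
      have hi' : i ≤ j := Nat.lt_succ_iff.1 (Finset.mem_range.1 hi)
      have hMM : M i * M (j-i) ≤ M j := by
        have hmm := Stmt8Aux.M_mul_le Mpos M0 M1 Mconv i (j-i)
        rwa [Nat.add_sub_cancel' hi'] at hmm
      have b1 := hDφ i t
      have b2 := hDg (j-i) t
      have hb12 : ‖iteratedFDeriv ℝ i φ t‖ * ‖iteratedFDeriv ℝ (j-i) g t‖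
          ≤ (Cφ * (Real.sqrt d * h⁻¹) ^ i * M i * Real.exp ((n₀:ℝ) * ‖t‖))
            * (Cψ * (Real.sqrt d * h⁻¹) ^ (j-i) * M (j-i) * Real.exp (-qR * ‖t - x‖)) :=
        mul_le_mul b1 b2 (norm_nonneg _) (mul_nonneg (mul_nonneg (mul_nonneg hCφ (pow_nonneg (by positivity) i)) (hMnn i)) (Real.exp_pos _).le)
      have hpowsplit : (Real.sqrt d * h⁻¹) ^ i * (Real.sqrt d * h⁻¹) ^ (j-i)
          = (Real.sqrt d * h⁻¹) ^ j := by
        rw [← pow_add, Nat.add_sub_cancel' hi']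
      have hKnn : (0:ℝ) ≤ (Cφ * Cψ) * (Real.sqrt (d:ℝ) * h⁻¹) ^ j :=
        mul_nonneg (mul_nonneg hCφ hCψ)
          (pow_nonneg (mul_nonneg (Real.sqrt_nonneg _) (inv_nonneg.2 hh.le)) j)
      have hmid : (Cφ * (Real.sqrt d * h⁻¹) ^ i * M i * Real.exp ((n₀:ℝ) * ‖t‖))
            * (Cψ * (Real.sqrt d * h⁻¹) ^ (j-i) * M (j-i) * Real.exp (-qR * ‖t - x‖))
          ≤ (Cφ * Cψ * Real.exp ((n₀:ℝ) * ‖x‖))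
            * (Real.sqrt d * h⁻¹) ^ j * M j * Real.exp (-((d:ℝ)+1) * ‖t - x‖) := by
        have e1 : (Cφ * (Real.sqrt d * h⁻¹) ^ i * M i * Real.exp ((n₀:ℝ) * ‖t‖))
            * (Cψ * (Real.sqrt d * h⁻¹) ^ (j-i) * M (j-i) * Real.exp (-qR * ‖t - x‖))
            = (Cφ * Cψ) * (Real.sqrt d * h⁻¹) ^ j * (M i * M (j-i))
              * (Real.exp ((n₀:ℝ) * ‖t‖) * Real.exp (-qR * ‖t - x‖)) := by
          rw [← hpowsplit]; ring
        rw [e1]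
        have h5 : (Cφ * Cψ) * (Real.sqrt (d:ℝ) * h⁻¹) ^ j * (M i * M (j-i))
              * (Real.exp ((n₀:ℝ) * ‖t‖) * Real.exp (-qR * ‖t - x‖))
            ≤ (Cφ * Cψ) * (Real.sqrt (d:ℝ) * h⁻¹) ^ j * M j
              * (Real.exp ((n₀:ℝ) * ‖x‖) * Real.exp (-((d:ℝ)+1) * ‖t - x‖)) := by
          apply mul_le_mul
          · exact mul_le_mul_of_nonneg_left hMM hKnn
          · exact hexps
          · positivity
          · exact mul_nonneg hKnn (hMnn j)
        calc (Cφ * Cψ) * (Real.sqrt (d:ℝ) * h⁻¹) ^ j * (M i * M (j-i))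
              * (Real.exp ((n₀:ℝ) * ‖t‖) * Real.exp (-qR * ‖t - x‖))
            ≤ (Cφ * Cψ) * (Real.sqrt (d:ℝ) * h⁻¹) ^ j * M j
              * (Real.exp ((n₀:ℝ) * ‖x‖) * Real.exp (-((d:ℝ)+1) * ‖t - x‖)) := h5
          _ = (Cφ * Cψ * Real.exp ((n₀:ℝ) * ‖x‖))
              * (Real.sqrt d * h⁻¹) ^ j * M j * Real.exp (-((d:ℝ)+1) * ‖t - x‖) := by ring
      rw [mul_assoc]
      exact mul_le_mul_of_nonneg_left (le_trans hb12 hmid) (by positivity)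
    calc ‖iteratedFDeriv ℝ j F t‖
        ≤ ∑ i ∈ Finset.range (j+1), (j.choose i : ℝ)
            * ‖iteratedFDeriv ℝ i φ t‖ * ‖iteratedFDeriv ℝ (j-i) g t‖ := lb
      _ ≤ ∑ i ∈ Finset.range (j+1), (j.choose i : ℝ)
            * ((Cφ * Cψ * Real.exp ((n₀:ℝ) * ‖x‖))
              * (Real.sqrt d * h⁻¹) ^ j * M j * Real.exp (-((d:ℝ)+1) * ‖t - x‖)) :=
          Finset.sum_le_sum hterm
      _ = (2:ℝ)^j * ((Cφ * Cψ * Real.exp ((n₀:ℝ) * ‖x‖))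
              * (Real.sqrt d * h⁻¹) ^ j * M j * Real.exp (-((d:ℝ)+1) * ‖t - x‖)) := by
          rw [← Finset.sum_mul]
          congr 1
          have := Nat.sum_range_choose j
          have hcast : ∑ i ∈ Finset.range (j+1), (j.choose i : ℝ) = ((2:ℝ))^j := by
            exact_mod_cast congrArg (Nat.cast : ℕ → ℝ) this
          exact hcast
      _ = (Cφ * Cψ * Real.exp ((n₀:ℝ) * ‖x‖)) * (2 * Real.sqrt d * h⁻¹) ^ j * M j
            * Real.exp (-((d:ℝ)+1) * ‖t - x‖) := by
          rw [show (2 * Real.sqrt d * h⁻¹)^j = (2:ℝ)^j * (Real.sqrt d * h⁻¹)^j by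
            rw [← mul_pow]; ring_nf]
          ring
  -- integrability
  have hIg : Integrable (fun t : Rd d => Real.exp (-((d:ℝ)+1) * ‖t - x‖)) :=
    Stmt8Aux.integrable_exp_decay x
  have hIntF : ∀ j : ℕ, Integrable (iteratedFDeriv ℝ j F) := by
    intro j
    refine (hIg.const_mul ((Cφ * Cψ * Real.exp ((n₀:ℝ) * ‖x‖))
        * (2 * Real.sqrt d * h⁻¹) ^ j * M j)).mono'
      ((hF.continuous_iteratedFDeriv (by exact_mod_cast le_top)).aestronglyMeasurable)
      (Filter.Eventually.of_forall (fun t => ?_))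
    calc ‖iteratedFDeriv ℝ j F t‖ ≤ _ := hBF j t
      _ = _ := by ring
  -- integral bound
  have hIexp : (∫ t : Rd d, Real.exp (-((d:ℝ)+1) * ‖t - x‖)) = Cint := by
    rw [hCintdef]
    exact integral_sub_right_eq_self (fun t : Rd d => Real.exp (-((d:ℝ)+1) * ‖t‖)) x
  have hI : ∀ j : ℕ, (∫ t, ‖iteratedFDeriv ℝ j F t‖)
      ≤ C * ((2 * Real.sqrt d * h⁻¹) ^ j * (M j * Real.exp ((n₀:ℝ) * ‖x‖))) := by
    intro j
    calc (∫ t, ‖iteratedFDeriv ℝ j F t‖)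
        ≤ ∫ t, ((Cφ * Cψ * Real.exp ((n₀:ℝ) * ‖x‖))
            * (2 * Real.sqrt d * h⁻¹) ^ j * M j) * Real.exp (-((d:ℝ)+1) * ‖t - x‖) :=
          integral_mono (hIntF j).norm (hIg.const_mul _) (fun t => hBF j t)
      _ = ((Cφ * Cψ * Real.exp ((n₀:ℝ) * ‖x‖)) * (2 * Real.sqrt d * h⁻¹) ^ j * M j) * Cint := by
          rw [integral_const_mul, hIexp]
      _ = C * ((2 * Real.sqrt d * h⁻¹) ^ j * (M j * Real.exp ((n₀:ℝ) * ‖x‖))) := by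
          rw [hCdef]; ring
  -- key inequality
  have hKI : ∀ p : ℕ, (2 * Real.pi * ‖ξ‖)^p * ‖STFT ψ φ x ξ‖
      ≤ C * ((2 * Real.sqrt d * h⁻¹) ^ p * (M p * Real.exp ((n₀:ℝ) * ‖x‖))) := by
    intro p
    have heq : STFT ψ φ x ξ = FourierTransform.fourier F ξ := Stmt8Aux.stft_eq ψ φ x ξ
    rw [heq]
    exact le_trans (Stmt8Aux.pow_norm_fourier_le hF hIntF p ξ) (hI p)
  -- per-p inequality with T
  have hT : ∀ p : ℕ, T^p * ‖STFT ψ φ x ξ‖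
      ≤ C * M p * Real.exp ((n₀:ℝ) * ‖x‖) := by
    intro p
    rcases Nat.eq_zero_or_pos d with rfl | hd
    · have hT0 : T = 0 := by
        rw [hTdef]
        simp
      rcases Nat.eq_zero_or_pos p with rfl | hp
      · have h0 := hKI 0
        simp only [pow_zero, one_mul] at h0 ⊢
        calc ‖STFT ψ φ x ξ‖ ≤ C * (M 0 * Real.exp ((n₀:ℝ) * ‖x‖)) := h0
          _ = C * M 0 * Real.exp ((n₀:ℝ) * ‖x‖) := by ring
      · rw [hT0, zero_pow hp.ne', zero_mul]
        have := Real.exp_pos ((n₀:ℝ) * ‖x‖)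
        have := hMnn p
        positivity
    · have hsd : (0:ℝ) < Real.sqrt d := Real.sqrt_pos.2 (by exact_mod_cast hd)
      have hTsplit : T = (2 * Real.pi * ‖ξ‖) * (h / (2 * Real.sqrt d)) := by
        rw [hTdef]
        field_simp
      have hcanc : (2 * Real.sqrt d * h⁻¹) * (h / (2 * Real.sqrt d)) = 1 := by
        field_simp
      calc T^p * ‖STFT ψ φ x ξ‖
          = ((2 * Real.pi * ‖ξ‖)^p * ‖STFT ψ φ x ξ‖) * (h / (2 * Real.sqrt d))^p := by
            rw [hTsplit, mul_pow]; ring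
        _ ≤ (C * ((2 * Real.sqrt d * h⁻¹) ^ p * (M p * Real.exp ((n₀:ℝ) * ‖x‖))))
              * (h / (2 * Real.sqrt d))^p :=
            mul_le_mul_of_nonneg_right (hKI p) (by positivity)
        _ = C * (M p * Real.exp ((n₀:ℝ) * ‖x‖))
              * ((2 * Real.sqrt d * h⁻¹) ^ p * (h / (2 * Real.sqrt d))^p) := by
            ring
        _ = C * M p * Real.exp ((n₀:ℝ) * ‖x‖) := by
            rw [← mul_pow, hcanc, one_pow, mul_one, hCdef]; ring
  -- conclude via the associated function
  rcases (norm_nonneg (STFT ψ φ x ξ)).eq_or_lt with hV0 | hV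
  · rw [← hV0]
    positivity
  · have hB : ‖STFT ψ φ x ξ‖ ≤ C * Real.exp ((n₀:ℝ) * ‖x‖) := by
      have h0 := hT 0
      rwa [pow_zero, one_mul, M0, mul_one] at h0
    have hBpos : 0 < C * Real.exp ((n₀:ℝ) * ‖x‖) := lt_of_lt_of_le hV hB
    have hlogBV : 0 ≤ Real.log ((C * Real.exp ((n₀:ℝ) * ‖x‖)) / ‖STFT ψ φ x ξ‖) :=
      Real.log_nonneg ((one_le_div hV).2 hB)
    have hnu : nuA M T ≤ Real.log ((C * Real.exp ((n₀:ℝ) * ‖x‖)) / ‖STFT ψ φ x ξ‖) := by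
      refine ciSup_le (fun p => ?_)
      rcases eq_or_ne (T^p) 0 with hTp | hTp
      · rw [hTp, zero_div, Real.log_zero]
        exact hlogBV
      · have hTppos : 0 < T^p := lt_of_le_of_ne (pow_nonneg hTnn p) (Ne.symm hTp)
        have hdiv : T^p / M p
            ≤ (C * Real.exp ((n₀:ℝ) * ‖x‖)) / ‖STFT ψ φ x ξ‖ := by
          rw [div_le_div_iff₀ (Mpos p) hV]
          calc T^p * ‖STFT ψ φ x ξ‖
              ≤ C * M p * Real.exp ((n₀:ℝ) * ‖x‖) := hT p
            _ = C * Real.exp ((n₀:ℝ) * ‖x‖) * M p := by ring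
        exact Real.log_le_log (div_pos hTppos (Mpos p)) hdiv
    have hexpnu : Real.exp (nuA M T)
        ≤ (C * Real.exp ((n₀:ℝ) * ‖x‖)) / ‖STFT ψ φ x ξ‖ := by
      rw [← Real.exp_log (div_pos hBpos hV)]
      exact Real.exp_le_exp.2 hnu
    have hmul : ‖STFT ψ φ x ξ‖ * Real.exp (nuA M T)
        ≤ C * Real.exp ((n₀:ℝ) * ‖x‖) := by
      have := (le_div_iff₀ hV).1 hexpnu
      linarith [this]
    calc ‖STFT ψ φ x ξ‖
        = ‖STFT ψ φ x ξ‖ * Real.exp (nuA M T) / Real.exp (nuA M T) := by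
          field_simp
      _ ≤ (C * Real.exp ((n₀:ℝ) * ‖x‖)) / Real.exp (nuA M T) := by
          gcongr
      _ = C * Real.exp ((n₀:ℝ) * ‖x‖ - nuA M T) := by
          rw [Real.exp_sub]; ring
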